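/- Let T, S : H₁ → H₂ be bounded linear operators with T surjective, and suppose N(T) ⊆ N(S) and ‖S T†‖ < 1. Then (1) T + S is surjective; (2) N(T + S) = N(T); (3) the Moore–Penrose inverse of T + S satisfies (T + S)† = T† (I + S T†)⁻¹ = (I + T†S)⁻¹ T†; (4) ‖(T + S)†‖ ≤ ‖T†‖ / (1 − ‖S T†‖); and (5) ‖(T + S)† − T†‖ ≤ ‖S T†‖ ‖T†‖ / (1 − ‖S T†‖). -/

import Mathlib

/-- `Td` is the Moore–Penrose inverse of the bounded operator `T` with closed range:
`T T† = P_{R(T)}`, `T† T = P_{N(T)^⊥}` and `N(T†) = R(T)^⊥` (the projection identities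
are expressed via the characteristic orthogonality properties of orthogonal
projections onto closed subspaces). -/
structure IsMPBOf {H₁ H₂ : Type*} [NormedAddCommGroup H₁] [InnerProductSpace ℂ H₁]
    [NormedAddCommGroup H₂] [InnerProductSpace ℂ H₂]
    (T : H₁ →L[ℂ] H₂) (Td : H₂ →L[ℂ] H₁) : Prop where
  mem_carrier : ∀ y : H₂, Td y ∈ (LinearMap.ker (T : H₁ →ₗ[ℂ] H₂))ᗮ
  proj_ran : ∀ y : H₂, y - T (Td y) ∈ (LinearMap.range (T : H₁ →ₗ[ℂ] H₂))ᗮ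
  proj_ker : ∀ x : H₁, x - Td (T x) ∈ LinearMap.ker (T : H₁ →ₗ[ℂ] H₂)
  ker_eq : ∀ y : H₂, Td y = 0 ↔ y ∈ (LinearMap.range (T : H₁ →ₗ[ℂ] H₂))ᗮ

/-- Corollary 3.11 (Ding–Huang, Lemma 3.4): if `T` is bounded and surjective,
`N(T) ⊆ N(S)` and `‖S T†‖ < 1`, then `T + S` is surjective, `N(T + S) = N(T)`,
`(T + S)† = T† (I + S T†)⁻¹ = (I + T† S)⁻¹ T†`, `‖(T + S)†‖ ≤ ‖T†‖/(1 − ‖S T†‖)` and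
`‖(T + S)† − T†‖ ≤ ‖S T†‖ ‖T†‖/(1 − ‖S T†‖)`. -/
theorem stmt9 {H₁ H₂ : Type*} [NormedAddCommGroup H₁] [InnerProductSpace ℂ H₁] [CompleteSpace H₁]
    [NormedAddCommGroup H₂] [InnerProductSpace ℂ H₂] [CompleteSpace H₂]
    (T S : H₁ →L[ℂ] H₂) (hsurj : Function.Surjective T)
    (Td : H₂ →L[ℂ] H₁) (hMP : IsMPBOf T Td)
    (hker : LinearMap.ker (T : H₁ →ₗ[ℂ] H₂) ≤ LinearMap.ker (S : H₁ →ₗ[ℂ] H₂))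
    (hnorm : ‖S.comp Td‖ < 1) :
    Function.Surjective (T + S) ∧
      LinearMap.ker ((T + S : H₁ →L[ℂ] H₂) : H₁ →ₗ[ℂ] H₂) = LinearMap.ker (T : H₁ →ₗ[ℂ] H₂) ∧
      ∃ U : H₂ →L[ℂ] H₁, IsMPBOf (T + S) U ∧
        (∃ W : H₂ →L[ℂ] H₂, W.comp (1 + S.comp Td) = 1 ∧ (1 + S.comp Td).comp W = 1 ∧
          U = Td.comp W) ∧
        (∃ V : H₁ →L[ℂ] H₁, V.comp (1 + Td.comp S) = 1 ∧ (1 + Td.comp S).comp V = 1 ∧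
          U = V.comp Td) ∧
        ‖U‖ ≤ ‖Td‖ / (1 - ‖S.comp Td‖) ∧
        ‖U - Td‖ ≤ ‖S.comp Td‖ * ‖Td‖ / (1 - ‖S.comp Td‖) := by

  set A := S.comp Td with hA
  have hrange : LinearMap.range (T : H₁ →ₗ[ℂ] H₂) = ⊤ := LinearMap.range_eq_top.mpr hsurj
  have hTTd : ∀ y, T (Td y) = y := by
    intro y
    have h := hMP.proj_ran y
    rw [hrange, Submodule.top_orthogonal_eq_bot, Submodule.mem_bot, sub_eq_zero] at h
    exact h.symm
  have hTdinj : ∀ y, Td y = 0 → y = 0 := by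
    intro y hy
    have h := (hMP.ker_eq y).mp hy
    rwa [hrange, Submodule.top_orthogonal_eq_bot, Submodule.mem_bot] at h
  have hAn : ‖-A‖ < 1 := by rwa [norm_neg]
  let u : (H₂ →L[ℂ] H₂)ˣ := Units.oneSub (-A) hAn
  have hu : (u : H₂ →L[ℂ] H₂) = 1 + A := by
    show (1 : H₂ →L[ℂ] H₂) - (-A) = 1 + A
    rw [sub_neg_eq_add]
  set W : H₂ →L[ℂ] H₂ := ↑u⁻¹ with hWdef
  have huW : ∀ z, (W ((1 + A) z)) = z := by
    intro z
    have h : ((↑u⁻¹ * ↑u : H₂ →L[ℂ] H₂)) z = (1 : H₂ →L[ℂ] H₂) z := by rw [u.inv_mul]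
    simpa [hu, ContinuousLinearMap.mul_apply] using h
  have hWu : ∀ z, ((1 + A) (W z)) = z := by
    intro z
    have h : ((↑u * ↑u⁻¹ : H₂ →L[ℂ] H₂)) z = (1 : H₂ →L[ℂ] H₂) z := by rw [u.mul_inv]
    simpa [hu, ContinuousLinearMap.mul_apply] using h
  have hAapp : ∀ z, A z = S (Td z) := fun z => rfl
  set U : H₂ →L[ℂ] H₁ := Td.comp W with hUdef
  have hTSTd : ∀ z, (T + S) (Td z) = (1 + A) z := by
    intro z
    simp [hTTd, hAapp]
  have hTSU : ∀ y, (T + S) (U y) = y := by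
    intro y
    show (T + S) (Td (W y)) = y
    rw [hTSTd, hWu]
  have hsurj2 : Function.Surjective (T + S) := fun y => ⟨U y, hTSU y⟩
  have hkerTS : LinearMap.ker ((T + S : H₁ →L[ℂ] H₂) : H₁ →ₗ[ℂ] H₂) = LinearMap.ker (T : H₁ →ₗ[ℂ] H₂) := by
    apply le_antisymm
    · intro x hx
      have hx' : T x + S x = 0 := hx
      have hk : x - Td (T x) ∈ LinearMap.ker (T : H₁ →ₗ[ℂ] H₂) := hMP.proj_ker x
      have hSk : S (x - Td (T x)) = 0 := hker hk
      have hSx : S x = S (Td (T x)) := by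
        have := hSk
        rw [map_sub, sub_eq_zero] at this
        exact this
      have h1 : (1 + A) (T x) = 0 := by
        have : T x + S (Td (T x)) = 0 := by rw [← hSx]; exact hx'
        simpa [hAapp] using this
      have : T x = 0 := by
        have := huW (T x)
        rw [h1, map_zero] at this
        exact this.symm
      exact this
    · intro x hx
      have hTx : T x = 0 := hx
      have hSx : S x = 0 := hker hx
      show T x + S x = 0
      rw [hTx, hSx, add_zero]
  have hrange2 : LinearMap.range ((T + S : H₁ →L[ℂ] H₂) : H₁ →ₗ[ℂ] H₂) = ⊤ := LinearMap.range_eq_top.mpr hsurj2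
  have hMP2 : IsMPBOf (T + S) U := by
    constructor
    · intro y
      rw [hkerTS]
      exact hMP.mem_carrier (W y)
    · intro y
      rw [hTSU, sub_self]
      exact Submodule.zero_mem _
    · intro x
      show x - U ((T + S) x) ∈ LinearMap.ker ((T + S : H₁ →L[ℂ] H₂) : H₁ →ₗ[ℂ] H₂)
      have : (T + S) (x - U ((T + S) x)) = 0 := by
        rw [map_sub, hTSU, sub_self]
      exact this
    · intro y
      rw [hrange2, Submodule.top_orthogonal_eq_bot, Submodule.mem_bot]
      constructor
      · intro hy
        have hWy : W y = 0 := hTdinj _ hy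
        have := hWu y
        rw [hWy, map_zero] at this
        exact this.symm
      · rintro rfl
        simp
  have hmul_comp : ∀ (f g : H₂ →L[ℂ] H₂), f * g = f.comp g := fun f g => rfl
  have hWexists : W.comp (1 + A) = 1 ∧ (1 + A).comp W = 1 ∧ U = Td.comp W := by
    refine ⟨?_, ?_, rfl⟩
    · rw [← hmul_comp, ← hu]; exact u.inv_mul
    · rw [← hmul_comp, ← hu]; exact u.mul_inv
  set V : H₁ →L[ℂ] H₁ := 1 - Td.comp (W.comp S) with hVdef
  have hVapp : ∀ x, V x = x - Td (W (S x)) := fun x => rfl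
  have hBapp : ∀ x, (Td.comp S) x = Td (S x) := fun x => rfl
  have hVexists : V.comp (1 + Td.comp S) = 1 ∧ (1 + Td.comp S).comp V = 1 ∧ U = V.comp Td := by
    refine ⟨?_, ?_, ?_⟩
    · ext x
      have h1 : S ((1 + Td.comp S) x) = (1 + A) (S x) := by
        simp [hBapp, hAapp]
      show V ((1 + Td.comp S) x) = x
      rw [hVapp, h1, huW]
      simp [hBapp]
    · ext x
      show ((1 + Td.comp S) (V x)) = x
      have h1 : (1 + Td.comp S) (V x) = V x + Td (S (V x)) := by simp [hBapp]
      have h2 : S (V x) = S x - A (W (S x)) := by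
        rw [hVapp, map_sub, hAapp]
      rw [h1, h2, hVapp, map_sub]
      have h4 : Td (S x) = Td (W (S x)) + Td (A (W (S x))) := by
        conv_lhs => rw [← hWu (S x)]
        simp
      rw [h4]
      abel
    · ext y
      show Td (W y) = V (Td y)
      rw [hVapp]
      have h1 : W (S (Td y)) = W ((1 + A) y) - W y := by
        rw [← map_sub]
        congr 1
        simp [hAapp]
      rw [h1, huW, map_sub]
      abel
  have hpos : (0:ℝ) < 1 - ‖A‖ := by linarith [norm_nonneg A, hnorm]
  have hWnorm : ‖W‖ ≤ (1 - ‖A‖)⁻¹ := by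
    have h1 : ‖W‖ ≤ ‖(1 : H₂ →L[ℂ] H₂)‖ - 1 + (1 - ‖-A‖)⁻¹ := by
      have : W = ∑' n : ℕ, (-A) ^ n := rfl
      rw [this]
      exact tsum_geometric_le_of_norm_lt_one (-A) hAn
    have h2 : ‖(1 : H₂ →L[ℂ] H₂)‖ ≤ 1 := ContinuousLinearMap.norm_id_le
    rw [norm_neg] at h1
    linarith
  have hUnorm : ‖U‖ ≤ ‖Td‖ / (1 - ‖A‖) := by
    calc ‖U‖ ≤ ‖Td‖ * ‖W‖ := ContinuousLinearMap.opNorm_comp_le _ _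
    _ ≤ ‖Td‖ * (1 - ‖A‖)⁻¹ := by
        exact mul_le_mul_of_nonneg_left hWnorm (norm_nonneg _)
    _ = ‖Td‖ / (1 - ‖A‖) := by rw [div_eq_mul_inv]
  have hUTd : ‖U - Td‖ ≤ ‖A‖ * ‖Td‖ / (1 - ‖A‖) := by
    have hdiff : U - Td = -(Td.comp (W.comp A)) := by
      ext y
      show Td (W y) - Td y = -(Td (W (A y)))
      have h1 : W (A y) = W ((1 + A) y) - W y := by
        rw [← map_sub]; congr 1; simp
      rw [h1, huW, map_sub]
      abel
    rw [hdiff, norm_neg]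
    calc ‖Td.comp (W.comp A)‖ ≤ ‖Td‖ * ‖W.comp A‖ := ContinuousLinearMap.opNorm_comp_le _ _
    _ ≤ ‖Td‖ * (‖W‖ * ‖A‖) :=
        mul_le_mul_of_nonneg_left (ContinuousLinearMap.opNorm_comp_le _ _) (norm_nonneg _)
    _ ≤ ‖Td‖ * ((1 - ‖A‖)⁻¹ * ‖A‖) := by
        apply mul_le_mul_of_nonneg_left _ (norm_nonneg _)
        exact mul_le_mul_of_nonneg_right hWnorm (norm_nonneg _)
    _ = ‖A‖ * ‖Td‖ / (1 - ‖A‖) := by ring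
  exact ⟨hsurj2, hkerTS, U, hMP2, ⟨W, hWexists⟩, ⟨V, hVexists⟩, hUnorm, hUTd⟩
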